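/- Let C = e₁C₁ ⊕ e₂C₂ ⊕ e₃C₃ ⊕ e₄C₄ be a λ-constacyclic code of length n over R with generator polynomials gᵢ(x) of Cᵢ satisfying gᵢ(x)hᵢ(x) = xⁿ - λᵢ in F_q[x]. Then C^⊥ = ⟨e₁h₁*(x) + e₂h₂*(x) + e₃h₃*(x) + e₄h₄*(x)⟩, where hᵢ* denotes the reciprocal polynomial of hᵢ. -/

import Mathlib

set_option synthInstance.maxHeartbeats 1000000
set_option maxHeartbeats 1000000
set_option maxSynthPendingDepth 2

noncomputable section

open MvPolynomial

/-- Generators u^2-u, v^2-v of the defining ideal. -/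
def genSet (F : Type) [Field F] : Set (MvPolynomial (Fin 2) F) :=
  {X 0 ^ 2 - X 0, X 1 ^ 2 - X 1}

/-- The ring R = F_q[u,v]/(u^2-u, v^2-v). -/
abbrev Rq (F : Type) [Field F] := MvPolynomial (Fin 2) F ⧸ Ideal.span (genSet F)

/-- The image of u in R. -/
def uu (F : Type) [Field F] : Rq F := Ideal.Quotient.mk _ (X 0)

/-- The image of v in R. -/
def vv (F : Type) [Field F] : Rq F := Ideal.Quotient.mk _ (X 1)

/-- The idempotents e1 = 1-u-v+uv, e2 = uv, e3 = u-uv, e4 = v-uv. -/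
def ee (F : Type) [Field F] : Fin 4 → Rq F :=
  ![1 - uu F - vv F + uu F * vv F, uu F * vv F, uu F - uu F * vv F, vv F - uu F * vv F]

/-- Evaluation of R at a point (x,y) with x^2 = x, y^2 = y. -/
def phi4 (F : Type) [Field F] (p : Fin 2 → F) (hp : ∀ i, p i ^ 2 = p i) : Rq F →+* F :=
  Ideal.Quotient.lift _ (aeval p).toRingHom (by
    intro a ha
    have h : Ideal.span (genSet F) ≤ RingHom.ker (aeval p).toRingHom := by
      rw [Ideal.span_le]
      rintro g (rfl | rfl) <;> simp [RingHom.mem_ker, hp 0, hp 1]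
    exact h ha)

/-- The projections φ₁, φ₂, φ₃, φ₄ : R → F_q sending a+bu+cv+duv to
a, a+b+c+d, a+b, a+c respectively (i.e. evaluation at (0,0),(1,1),(1,0),(0,1)). -/
def phiI (F : Type) [Field F] : Fin 4 → (Rq F →+* F) :=
  ![phi4 F ![0,0] (by intro i; fin_cases i <;> norm_num),
    phi4 F ![1,1] (by intro i; fin_cases i <;> norm_num),
    phi4 F ![1,0] (by intro i; fin_cases i <;> norm_num),
    phi4 F ![0,1] (by intro i; fin_cases i <;> norm_num)]

/-- The ring homomorphism R[x]/(xⁿ-λ) → F[x]/(xⁿ-φᵢ(λ)) induced by φᵢ. -/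
def quotMap (F : Type) [Field F] (n : ℕ) (lam : Rq F) (i : Fin 4) :
    (Polynomial (Rq F) ⧸ Ideal.span {Polynomial.X ^ n - Polynomial.C lam}) →+*
    (Polynomial F ⧸ Ideal.span {Polynomial.X ^ n - Polynomial.C (phiI F i lam)}) :=
  Ideal.Quotient.lift _
    ((Ideal.Quotient.mk (Ideal.span {Polynomial.X ^ n - Polynomial.C (phiI F i lam)})).comp
      (Polynomial.mapRingHom (phiI F i))) (by
    intro a ha
    have h : Ideal.span {Polynomial.X ^ n - Polynomial.C lam} ≤
        RingHom.ker ((Ideal.Quotient.mk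
            (Ideal.span {Polynomial.X ^ n - Polynomial.C (phiI F i lam)})).comp
          (Polynomial.mapRingHom (phiI F i))) := by
      rw [Ideal.span_le]
      rintro g rfl
      have : (Polynomial.mapRingHom (phiI F i)) (Polynomial.X ^ n - Polynomial.C lam) =
          Polynomial.X ^ n - Polynomial.C (phiI F i lam) := by
        simp
      simp only [SetLike.mem_coe, RingHom.mem_ker, RingHom.comp_apply, this,
        Ideal.Quotient.eq_zero_iff_mem]
      exact Ideal.subset_span rfl
    exact h ha)

/-- The dual of a code with respect to the standard inner product. -/
def dualCode {S ι : Type} [CommRing S] [Fintype ι] (C : Set (ι → S)) : Set (ι → S) :=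
  {r | ∀ s ∈ C, ∑ j, r j * s j = 0}

/-- The set of coefficient vectors of a μ-constacyclic code, viewed as an ideal of
S[x]/(xⁿ-μ). -/
def vecOf {S : Type} [CommRing S] {n : ℕ} (μ : S)
    (C : Ideal (Polynomial S ⧸ Ideal.span {Polynomial.X ^ n - Polynomial.C μ})) :
    Set (Fin n → S) :=
  {c | Ideal.Quotient.mk _ (∑ j, Polynomial.C (c j) * Polynomial.X ^ (j : ℕ)) ∈ C}

/-- The reciprocal polynomial f*(x) = x^{r+i} f(1/x), where r = deg f and i is the
smallest index of a nonzero coefficient. -/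
def recip {F : Type} [Field F] (f : Polynomial F) : Polynomial F :=
  Polynomial.X ^ f.natTrailingDegree * f.reverse

section Rlevel
variable (F : Type) [Field F]

lemma uu_sq : uu F ^ 2 = uu F := by
  have h : (X (0:Fin 2) ^ 2 - X 0 : MvPolynomial (Fin 2) F) ∈ Ideal.span (genSet F) :=
    Ideal.subset_span (by left; rfl)
  have h2 := Ideal.Quotient.eq_zero_iff_mem.mpr h
  rw [map_sub, map_pow, sub_eq_zero] at h2
  exact h2

lemma vv_sq : vv F ^ 2 = vv F := by
  have h : (X (1:Fin 2) ^ 2 - X 1 : MvPolynomial (Fin 2) F) ∈ Ideal.span (genSet F) :=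
    Ideal.subset_span (by right; rfl)
  have h2 := Ideal.Quotient.eq_zero_iff_mem.mpr h
  rw [map_sub, map_pow, sub_eq_zero] at h2
  exact h2

lemma phi_uu (i : Fin 4) : phiI F i (uu F) = ![0,1,1,0] i := by
  fin_cases i <;> simp [phiI, phi4, uu]

lemma phi_vv (i : Fin 4) : phiI F i (vv F) = ![0,1,0,1] i := by
  fin_cases i <;> simp [phiI, phi4, vv]

lemma phi_alg (i : Fin 4) (a : F) : phiI F i (algebraMap F (Rq F) a) = a := by
  have h : (algebraMap F (Rq F)) a = Ideal.Quotient.mk (Ideal.span (genSet F)) (C a) := rfl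
  rw [h]
  fin_cases i <;> simp [phiI, phi4]

lemma sum_ee : ∑ i, ee F i = 1 := by
  simp [ee, Fin.sum_univ_four]
  ring

end Rlevel
section Rlevel2
variable (F : Type) [Field F]

lemma ee_mul_uu (i : Fin 4) :
    ee F i * uu F = algebraMap F (Rq F) (phiI F i (uu F)) * ee F i := by
  have hu := uu_sq F
  have hv := vv_sq F
  fin_cases i <;>
    simp [ee, phi_uu, map_one, map_zero] <;>
    [ (linear_combination (vv F - 1) * hu);
      (linear_combination vv F * hu);
      (linear_combination (1 - vv F) * hu);
      (linear_combination (-vv F) * hu) ]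

lemma ee_mul_vv (i : Fin 4) :
    ee F i * vv F = algebraMap F (Rq F) (phiI F i (vv F)) * ee F i := by
  have hu := uu_sq F
  have hv := vv_sq F
  fin_cases i <;>
    simp [ee, phi_vv, map_one, map_zero] <;>
    [ (linear_combination (uu F - 1) * hv);
      (linear_combination uu F * hv);
      (linear_combination (-uu F) * hv);
      (linear_combination (1 - uu F) * hv) ]

lemma decomp (r : Rq F) :
    ∑ i, algebraMap F (Rq F) (phiI F i r) * ee F i = r := by
  obtain ⟨p, rfl⟩ := Ideal.Quotient.mk_surjective r
  induction p using MvPolynomial.induction_on with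
  | C a =>
      have h : (Ideal.Quotient.mk (Ideal.span (genSet F))) (C a) = algebraMap F (Rq F) a := rfl
      rw [h]
      simp only [phi_alg]
      rw [← Finset.mul_sum, sum_ee, mul_one]
  | add p q hp hq =>
      rw [map_add]
      simp only [map_add, add_mul, Finset.sum_add_distrib, hp, hq]
  | mul_X p j hp =>
      rw [map_mul]
      have hx : ∀ i : Fin 4, ee F i * (Ideal.Quotient.mk (Ideal.span (genSet F)) (X j)) =
          algebraMap F (Rq F) (phiI F i ((Ideal.Quotient.mk (Ideal.span (genSet F))) (X j))) *
            ee F i := by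
        intro i
        fin_cases j
        · exact ee_mul_uu F i
        · exact ee_mul_vv F i
      calc ∑ i, algebraMap F (Rq F)
            (phiI F i ((Ideal.Quotient.mk (Ideal.span (genSet F))) p *
              (Ideal.Quotient.mk (Ideal.span (genSet F))) (X j))) * ee F i
          = ∑ i, algebraMap F (Rq F)
              (phiI F i ((Ideal.Quotient.mk (Ideal.span (genSet F))) p)) *
              (ee F i * (Ideal.Quotient.mk (Ideal.span (genSet F))) (X j)) := by
            refine Finset.sum_congr rfl fun i _ => ?_
            rw [map_mul, map_mul, hx i]
            ring
        _ = (∑ i, algebraMap F (Rq F)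
              (phiI F i ((Ideal.Quotient.mk (Ideal.span (genSet F))) p)) * ee F i) *
              (Ideal.Quotient.mk (Ideal.span (genSet F))) (X j) := by
            rw [Finset.sum_mul]
            refine Finset.sum_congr rfl fun i _ => by ring
        _ = _ := by rw [hp]

lemma phi_inj {r : Rq F} (h : ∀ i, phiI F i r = 0) : r = 0 := by
  have := decomp F r
  simp only [h, map_zero, zero_mul, Finset.sum_const_zero] at this
  exact this.symm

lemma phi_ee (i j : Fin 4) : phiI F i (ee F j) = if i = j then 1 else 0 := by
  fin_cases i <;> fin_cases j <;>
    simp [ee, map_add, map_sub, map_mul, map_one, phi_uu, phi_vv]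

end Rlevel2
lemma quotMap_mk (F : Type) [Field F] (n : ℕ) (lam : Rq F) (i : Fin 4)
    (p : Polynomial (Rq F)) :
    quotMap F n lam i (Ideal.Quotient.mk _ p) =
      Ideal.Quotient.mk (Ideal.span {Polynomial.X ^ n - Polynomial.C (phiI F i lam)}) (p.map (phiI F i)) := by
  simp [quotMap]
  rfl

lemma phi_map_map (F : Type) [Field F] (i : Fin 4) (q : Polynomial F) :
    (q.map (algebraMap F (Rq F))).map (phiI F i) = q := by
  rw [Polynomial.map_map]
  have h : (phiI F i).comp (algebraMap F (Rq F)) = RingHom.id F := by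
    ext a; exact phi_alg F i a
  rw [h, Polynomial.map_id]

lemma map_ee_sum (F : Type) [Field F] (i : Fin 4) (q : Fin 4 → Polynomial F) :
    (∑ j, Polynomial.C (ee F j) * (q j).map (algebraMap F (Rq F))).map (phiI F i) = q i := by
  rw [Polynomial.map_sum]
  have h : ∀ j, (Polynomial.C (ee F j) * (q j).map (algebraMap F (Rq F))).map (phiI F i) =
      if i = j then q j else 0 := by
    intro j
    rw [Polynomial.map_mul, Polynomial.map_C, phi_map_map, phi_ee]
    by_cases hij : i = j <;> simp [hij]
  simp only [h]
  simp

lemma poly_inj (F : Type) [Field F] (n : ℕ) (lam : Rq F)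
    {z : Polynomial (Rq F) ⧸ Ideal.span {Polynomial.X ^ n - Polynomial.C lam}}
    (hz : ∀ i, quotMap F n lam i z = 0) : z = 0 := by
  obtain ⟨p, rfl⟩ := Ideal.Quotient.mk_surjective z
  have h1 : ∀ i, ∃ q : Polynomial F, p.map (phiI F i) = q * (Polynomial.X ^ n - Polynomial.C (phiI F i lam)) := by
    intro i
    have := hz i
    rw [quotMap_mk, Ideal.Quotient.eq_zero_iff_mem, Ideal.mem_span_singleton] at this
    obtain ⟨q, hq⟩ := this
    exact ⟨q, by rw [hq]; ring⟩
  choose q hq using h1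
  have hp : p = (∑ j, Polynomial.C (ee F j) * (q j).map (algebraMap F (Rq F))) *
      (Polynomial.X ^ n - Polynomial.C lam) := by
    ext k
    rw [← sub_eq_zero]
    apply phi_inj F
    intro i
    rw [map_sub, sub_eq_zero]
    have hcoe : ∀ r : Polynomial (Rq F), phiI F i (r.coeff k) = (r.map (phiI F i)).coeff k := by
      intro r; rw [Polynomial.coeff_map]
    rw [hcoe, hcoe, Polynomial.map_mul, map_ee_sum]
    have : (Polynomial.X ^ n - Polynomial.C lam : Polynomial (Rq F)).map (phiI F i) =
        Polynomial.X ^ n - Polynomial.C (phiI F i lam) := by simp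
    rw [this, ← hq]
  rw [hp, Ideal.Quotient.eq_zero_iff_mem]
  exact Ideal.mul_mem_left _ _ (Ideal.subset_span rfl)
lemma quotMap_surj (F : Type) [Field F] (n : ℕ) (lam : Rq F) (i : Fin 4) :
    Function.Surjective (quotMap F n lam i) := by
  intro y
  obtain ⟨a, rfl⟩ := Ideal.Quotient.mk_surjective y
  exact ⟨Ideal.Quotient.mk _ (a.map (algebraMap F (Rq F))), by
    rw [quotMap_mk, phi_map_map]⟩

lemma quotMap_C_ee (F : Type) [Field F] (n : ℕ) (lam : Rq F) (i j : Fin 4) :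
    quotMap F n lam i (Ideal.Quotient.mk _ (Polynomial.C (ee F j))) =
      if i = j then 1 else 0 := by
  rw [quotMap_mk, Polynomial.map_C, phi_ee]
  by_cases hij : i = j <;> simp [hij]

lemma memC (F : Type) [Field F] (n : ℕ) (lam : Rq F)
    (C : Ideal (Polynomial (Rq F) ⧸ Ideal.span {Polynomial.X ^ n - Polynomial.C lam}))
    (g : Fin 4 → Polynomial F)
    (hgen : ∀ i, Ideal.map (quotMap F n lam i) C =
      Ideal.span {Ideal.Quotient.mk _ (g i)})
    (z : Polynomial (Rq F) ⧸ Ideal.span {Polynomial.X ^ n - Polynomial.C lam}) :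
    z ∈ C ↔ ∀ i, quotMap F n lam i z ∈
      Ideal.span {Ideal.Quotient.mk (Ideal.span {Polynomial.X ^ n -
        Polynomial.C (phiI F i lam)}) (g i)} := by
  constructor
  · intro hz i
    rw [← hgen i]
    exact Ideal.mem_map_of_mem _ hz
  · intro hz
    have h1 : ∀ i, ∃ c ∈ C, quotMap F n lam i c = quotMap F n lam i z := by
      intro i
      have := hz i
      rw [← hgen i, Ideal.mem_map_iff_of_surjective _ (quotMap_surj F n lam i)] at this
      obtain ⟨c, hc1, hc2⟩ := this
      exact ⟨c, hc1, hc2⟩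
    choose c hc1 hc2 using h1
    have key : z = ∑ j, Ideal.Quotient.mk _ (Polynomial.C (ee F j)) * c j := by
      rw [← sub_eq_zero]
      apply poly_inj F n lam
      intro i
      rw [map_sub, map_sum, sub_eq_zero]
      have : ∀ j, quotMap F n lam i (Ideal.Quotient.mk _ (Polynomial.C (ee F j)) * c j) =
          if i = j then quotMap F n lam i (c j) else 0 := by
        intro j
        rw [map_mul, quotMap_C_ee]
        by_cases hij : i = j <;> simp [hij]
      simp only [this]
      rw [Finset.sum_ite_eq (Finset.univ : Finset (Fin 4)) i
        (fun j => quotMap F n lam i (c j))]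
      simp [hc2 i]
    rw [key]
    exact Ideal.sum_mem C fun j _ => Ideal.mul_mem_left _ _ (hc1 j)

lemma memD (F : Type) [Field F] (n : ℕ) (lam : Rq F) (H : Fin 4 → Polynomial F)
    (z : Polynomial (Rq F) ⧸ Ideal.span {Polynomial.X ^ n - Polynomial.C lam}) :
    z ∈ Ideal.span {Ideal.Quotient.mk _
        (∑ j, Polynomial.C (ee F j) * (H j).map (algebraMap F (Rq F)))} ↔
      ∀ i, quotMap F n lam i z ∈
        Ideal.span {Ideal.Quotient.mk (Ideal.span {Polynomial.X ^ n -
          Polynomial.C (phiI F i lam)}) (H i)} := by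
  have hgenmap : ∀ i, quotMap F n lam i (Ideal.Quotient.mk _
      (∑ j, Polynomial.C (ee F j) * (H j).map (algebraMap F (Rq F)))) =
      Ideal.Quotient.mk _ (H i) := by
    intro i
    rw [quotMap_mk, map_ee_sum]
  constructor
  · intro hz i
    replace hz := (Ideal.mem_span_singleton (α := Polynomial (Rq F) ⧸
      Ideal.span {Polynomial.X ^ n - Polynomial.C lam})).mp hz
    rw [Ideal.mem_span_singleton]
    obtain ⟨b, hb⟩ := hz
    exact ⟨quotMap F n lam i b, by rw [hb, map_mul, hgenmap]⟩
  · intro hz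
    have h1 : ∀ i, ∃ a : Polynomial F, quotMap F n lam i z =
        Ideal.Quotient.mk _ (H i) * Ideal.Quotient.mk _ (a) := by
      intro i
      have := hz i
      rw [Ideal.mem_span_singleton] at this
      obtain ⟨b, hb⟩ := this
      obtain ⟨a, ha⟩ := Ideal.Quotient.mk_surjective b
      exact ⟨a, by rw [hb, ha]⟩
    choose a ha using h1
    have key : z = Ideal.Quotient.mk _
        (∑ j, Polynomial.C (ee F j) * (a j).map (algebraMap F (Rq F))) *
        Ideal.Quotient.mk _
        (∑ j, Polynomial.C (ee F j) * (H j).map (algebraMap F (Rq F))) := by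
      rw [← sub_eq_zero]
      apply poly_inj F n lam
      intro i
      rw [map_sub, map_mul, sub_eq_zero, hgenmap]
      have h2 : quotMap F n lam i (Ideal.Quotient.mk _
          (∑ j, Polynomial.C (ee F j) * (a j).map (algebraMap F (Rq F)))) =
          Ideal.Quotient.mk _ (a i) := by
        rw [quotMap_mk, map_ee_sum]
      rw [h2, ha i, mul_comm]
    rw [key]
    exact Ideal.mul_mem_left _ _ (Ideal.subset_span rfl)
section PvHelpers
variable {S : Type} [CommRing S] {n : ℕ}

/-- coefficient vector to polynomial -/
def Pv (c : Fin n → S) : Polynomial S :=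
  ∑ j : Fin n, Polynomial.C (c j) * Polynomial.X ^ (j : ℕ)

lemma Pv_coeff (c : Fin n → S) (j : Fin n) : (Pv c).coeff (j : ℕ) = c j := by
  rw [Pv, Polynomial.finset_sum_coeff]
  have h : ∀ k : Fin n, (Polynomial.C (c k) * Polynomial.X ^ (k : ℕ)).coeff (j : ℕ) =
      if k = j then c k else 0 := by
    intro k
    rw [Polynomial.coeff_C_mul, Polynomial.coeff_X_pow]
    by_cases hkj : k = j
    · simp [hkj]
    · have : (j : ℕ) ≠ (k : ℕ) := fun hc => hkj (Fin.ext hc).symm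
      simp [this, hkj]
  simp only [h]
  simp

lemma Pv_degree_lt (c : Fin n → S) : (Pv c).degree < (n : WithBot ℕ) := by
  by_cases hn : n = 0
  · subst hn
    have h0 : Pv c = 0 := by simp [Pv]
    rw [h0, Polynomial.degree_zero]
    exact WithBot.bot_lt_coe 0
  refine lt_of_le_of_lt (Polynomial.degree_sum_le _ _) ?_
  rw [Finset.sup_lt_iff (by exact WithBot.bot_lt_coe n)]
  intro j _
  refine lt_of_le_of_lt (Polynomial.degree_C_mul_X_pow_le _ _) ?_
  exact_mod_cast j.isLt

lemma Pv_eq_of_degree_lt {p : Polynomial S} (hp : p.degree < (n : WithBot ℕ)) :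
    Pv (fun j : Fin n => p.coeff (j : ℕ)) = p := by
  by_cases hp0 : p = 0
  · subst hp0; simp [Pv]
  rw [Pv]
  conv_rhs => rw [p.as_sum_range' n ((Polynomial.natDegree_lt_iff_degree_lt hp0).mpr hp)]
  rw [Fin.sum_univ_eq_sum_range (fun j => Polynomial.C (p.coeff j) * Polynomial.X ^ j) n]
  refine Finset.sum_congr rfl fun k _ => ?_
  rw [Polynomial.C_mul_X_pow_eq_monomial]

end PvHelpers
section FieldSide
variable {F : Type} [Field F]

/-- truncation of a polynomial to its first n coefficients -/
def theta (F : Type) [Field F] (n : ℕ) : Polynomial F →ₗ[F] (Fin n → F) :=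
  LinearMap.pi fun j : Fin n => Polynomial.lcoeff F (j : ℕ)

lemma theta_apply (n : ℕ) (p : Polynomial F) (j : Fin n) :
    theta F n p j = p.coeff (j : ℕ) := rfl

/-- multiplication by G then truncation, restricted to degree < m -/
def MG (F : Type) [Field F] (n : ℕ) (G : Polynomial F) (m : ℕ) :
    Polynomial.degreeLT F m →ₗ[F] (Fin n → F) :=
  (theta F n) ∘ₗ (LinearMap.mulLeft F G) ∘ₗ (Submodule.subtype _)

lemma MG_apply (n : ℕ) (G : Polynomial F) (m : ℕ) (a : Polynomial.degreeLT F m) (j : Fin n) :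
    MG F n G m a j = (G * (a : Polynomial F)).coeff (j : ℕ) := rfl

lemma eq_of_mk_eq {n : ℕ} (hn : 0 < n) (μ : F) {p q : Polynomial F}
    (h : Ideal.Quotient.mk (Ideal.span {Polynomial.X ^ n - Polynomial.C μ}) p =
      Ideal.Quotient.mk _ q)
    (hp : p.degree < (n : WithBot ℕ)) (hq : q.degree < (n : WithBot ℕ)) : p = q := by
  have hd : (Polynomial.X ^ n - Polynomial.C μ) ∣ (p - q) :=
    Ideal.mem_span_singleton.mp (Ideal.Quotient.eq.mp h)
  have hdeg : (p - q).degree < (Polynomial.X ^ n - Polynomial.C μ).degree := by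
    rw [Polynomial.degree_X_pow_sub_C hn]
    exact lt_of_le_of_lt (Polynomial.degree_sub_le p q) (max_lt hp hq)
  have := Polynomial.eq_zero_of_dvd_of_degree_lt hd hdeg
  exact sub_eq_zero.mp this

lemma degree_mul_lt {n : ℕ} {G H a : Polynomial F} (hGne : G ≠ 0)
    (hdeg : G.natDegree + H.natDegree = n)
    (ha : a ∈ Polynomial.degreeLT F H.natDegree) :
    (G * a).degree < (n : WithBot ℕ) := by
  by_cases ha0 : a = 0
  · subst ha0
    rw [mul_zero, Polynomial.degree_zero]
    exact WithBot.bot_lt_coe n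
  rw [Polynomial.mem_degreeLT] at ha
  have hna : a.natDegree < H.natDegree := (Polynomial.natDegree_lt_iff_degree_lt ha0).mpr ha
  have hne : G * a ≠ 0 := mul_ne_zero hGne ha0
  rw [← Polynomial.natDegree_lt_iff_degree_lt hne, Polynomial.natDegree_mul hGne ha0]
  omega

lemma VEC {n : ℕ} (hn : 0 < n) (ν : F) (G H : Polynomial F) (hG : G.Monic)
    (hfac : G * H = Polynomial.X ^ n - Polynomial.C ν) :
    vecOf ν (Ideal.span {Ideal.Quotient.mk _ G}) =
      ((LinearMap.range (MG F n G H.natDegree) : Submodule F (Fin n → F)) :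
        Set (Fin n → F)) := by
  have hGHmonic : (G * H).Monic := by
    rw [hfac]; exact Polynomial.monic_X_pow_sub_C ν hn.ne'
  have hH : H.Monic := hG.of_mul_monic_left hGHmonic
  have hGne : G ≠ 0 := hG.ne_zero
  have hHne : H ≠ 0 := hH.ne_zero
  have hdeg : G.natDegree + H.natDegree = n := by
    have h1 : (G * H).natDegree = n := by rw [hfac, Polynomial.natDegree_X_pow_sub_C]
    rwa [Polynomial.natDegree_mul hGne hHne] at h1
  ext c
  simp only [vecOf, Set.mem_setOf_eq, SetLike.mem_coe]
  constructor
  · intro hc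
    rw [Ideal.mem_span_singleton] at hc
    obtain ⟨b, hb⟩ := hc
    obtain ⟨a, rfl⟩ := Ideal.Quotient.mk_surjective b
    set a' := a %ₘ H with ha'
    have ha'mem : a' ∈ Polynomial.degreeLT F H.natDegree := by
      rw [Polynomial.mem_degreeLT, ← Polynomial.degree_eq_natDegree hHne]
      exact Polynomial.degree_modByMonic_lt a hH
    have e1 : G * a' + (Polynomial.X ^ n - Polynomial.C ν) * (a /ₘ H) = G * a := by
      rw [← hfac]
      calc G * a' + G * H * (a /ₘ H) = G * (a %ₘ H + H * (a /ₘ H)) := by rw [ha']; ring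
        _ = G * a := by rw [Polynomial.modByMonic_add_div a H]
    have hmk : Ideal.Quotient.mk (Ideal.span {Polynomial.X ^ n - Polynomial.C ν})
        (∑ j : Fin n, Polynomial.C (c j) * Polynomial.X ^ (j : ℕ)) =
        Ideal.Quotient.mk _ (G * a') := by
      rw [hb, ← map_mul, ← e1, map_add]
      have hz : Ideal.Quotient.mk (Ideal.span {Polynomial.X ^ n - Polynomial.C ν})
          ((Polynomial.X ^ n - Polynomial.C ν) * (a /ₘ H)) = 0 := by
        rw [Ideal.Quotient.eq_zero_iff_mem]
        exact Ideal.mul_mem_right _ _ (Ideal.subset_span rfl)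
      rw [hz, add_zero]
    have heq : Pv c = G * a' := by
      refine eq_of_mk_eq hn ν ?_ (Pv_degree_lt c) (degree_mul_lt hGne hdeg ha'mem)
      exact hmk
    refine ⟨⟨a', ha'mem⟩, ?_⟩
    funext j
    rw [MG_apply, ← heq, Pv_coeff]
  · rintro ⟨⟨a, ha⟩, rfl⟩
    have hPv : Pv (MG F n G H.natDegree ⟨a, ha⟩) = G * a := by
      have : MG F n G H.natDegree ⟨a, ha⟩ = fun j : Fin n => (G * a).coeff (j : ℕ) := rfl
      rw [this]
      exact Pv_eq_of_degree_lt (degree_mul_lt hGne hdeg ha)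
    show Ideal.Quotient.mk _ (∑ j : Fin n, Polynomial.C _ * Polynomial.X ^ (j : ℕ)) ∈ _
    rw [show (∑ j : Fin n, Polynomial.C (MG F n G H.natDegree ⟨a, ha⟩ j) *
      Polynomial.X ^ (j : ℕ)) = Pv (MG F n G H.natDegree ⟨a, ha⟩) from rfl, hPv]
    rw [Ideal.mem_span_singleton]
    exact ⟨Ideal.Quotient.mk _ a, by rw [map_mul]⟩

end FieldSide
section FieldSide2
variable {F : Type} [Field F]

lemma MG_inj {n : ℕ} {G : Polynomial F} {m : ℕ} (hGne : G ≠ 0)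
    (hle : G.natDegree + m ≤ n) : Function.Injective (MG F n G m) := by
  rw [← LinearMap.ker_eq_bot]
  rw [Submodule.eq_bot_iff]
  rintro ⟨a, ha⟩ hker
  have h0 : ∀ j : Fin n, (G * a).coeff (j : ℕ) = 0 := by
    intro j
    have := congrFun (LinearMap.mem_ker.mp hker) j
    exact this
  have hGa : G * a = 0 := by
    by_cases ha0 : a = 0
    · rw [ha0, mul_zero]
    have hdeg : (G * a).natDegree < n := by
      rw [Polynomial.mem_degreeLT] at ha
      have := (Polynomial.natDegree_lt_iff_degree_lt ha0).mpr ha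
      rw [Polynomial.natDegree_mul hGne ha0]
      omega
    ext k
    by_cases hk : k < n
    · exact h0 ⟨k, hk⟩
    · exact Polynomial.coeff_eq_zero_of_natDegree_lt (by omega)
  have : a = 0 := by
    rcases mul_eq_zero.mp hGa with h | h
    · exact absurd h hGne
    · exact h
  exact Subtype.ext this

lemma MG_finrank {n : ℕ} {G : Polynomial F} {m : ℕ} (hGne : G ≠ 0)
    (hle : G.natDegree + m ≤ n) :
    Module.finrank F (LinearMap.range (MG F n G m)) = m := by
  rw [LinearMap.finrank_range_of_inj (MG_inj hGne hle)]
  rw [(Polynomial.degreeLTEquiv F m).finrank_eq]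
  exact Module.finrank_fin_fun F

lemma MG_range_eq_span {n : ℕ} (G : Polynomial F) (m : ℕ) :
    LinearMap.range (MG F n G m) =
      Submodule.span F ((fun l => theta F n (G * Polynomial.X ^ l)) '' ↑(Finset.range m)) := by
  classical
  rw [MG, LinearMap.range_comp, LinearMap.range_comp, Submodule.range_subtype,
    Polynomial.degreeLT_eq_span_X_pow, Submodule.map_span, Submodule.map_span]
  congr 1
  rw [Finset.coe_image, Set.image_image, Set.image_image]
  rfl

/-- the standard bilinear form -/
def Bf (F : Type) [Field F] (n : ℕ) : LinearMap.BilinForm F (Fin n → F) :=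
  LinearMap.mk₂ F (fun x y => ∑ j, x j * y j)
    (fun m₁ m₂ y => by simp [add_mul, Finset.sum_add_distrib])
    (fun c x y => by simp [Finset.mul_sum, mul_assoc])
    (fun x y₁ y₂ => by simp [mul_add, Finset.sum_add_distrib])
    (fun c x y => by
      simp only [Pi.smul_apply, smul_eq_mul, Finset.mul_sum]
      exact Finset.sum_congr rfl fun j _ => by ring)

lemma Bf_apply {n : ℕ} (x y : Fin n → F) : Bf F n x y = ∑ j, x j * y j := rfl

lemma Bf_refl {n : ℕ} : (Bf F n).IsRefl := by
  intro x y hxy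
  rw [Bf_apply] at hxy ⊢
  rw [← hxy]
  exact Finset.sum_congr rfl fun j _ => mul_comm _ _

lemma Bf_nondeg {n : ℕ} : (Bf F n).Nondegenerate := by
  refine (LinearMap.IsRefl.nondegenerate_iff_separatingLeft
    (Bf_refl : LinearMap.IsRefl (Bf F n))).mpr ?_
  intro x hx
  funext j
  have := hx (Pi.single j 1)
  rw [Bf_apply] at this
  simp only [Pi.single_apply, mul_ite, mul_one, mul_zero, Finset.sum_ite_eq',
    Finset.mem_univ, if_true] at this
  exact this

lemma dual_eq_orth {n : ℕ} (W : Submodule F (Fin n → F)) :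
    dualCode ((W : Submodule F (Fin n → F)) : Set (Fin n → F)) =
      ↑((Bf F n).orthogonal W) := by
  ext r
  simp only [dualCode, Set.mem_setOf_eq, SetLike.mem_coe,
    LinearMap.BilinForm.mem_orthogonal_iff]
  constructor
  · intro hr s hs
    have := hr s hs
    rw [Bf_apply, ← this]
    exact Finset.sum_congr rfl fun j _ => mul_comm _ _
  · intro hr s hs
    have := hr s hs
    rw [Bf_apply] at this
    rw [← this]
    exact Finset.sum_congr rfl fun j _ => mul_comm _ _

end FieldSide2
section Ortho
variable {F : Type} [Field F]

lemma ortho {n : ℕ} (ν : F) {g h : Polynomial F} (hgne : g ≠ 0) (hhne : h ≠ 0)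
    (hdeg : g.natDegree + h.natDegree = n)
    (hfac : g * h = Polynomial.X ^ n - Polynomial.C ν)
    {k l : ℕ} (hk : k < g.natDegree) (hl : l < h.natDegree) :
    ∑ j : Fin n, (g * Polynomial.X ^ l).coeff (j : ℕ) *
      (h.reverse * Polynomial.X ^ k).coeff (j : ℕ) = 0 := by
  set d := h.natDegree + k - l with hd
  have hd1 : 0 < d := by omega
  have hd2 : d < n := by omega
  have hrevle : h.reverse.natDegree ≤ h.natDegree := h.reverse_natDegree_le
  have hcd : (g * h).coeff d = 0 := by
    rw [hfac, Polynomial.coeff_sub, Polynomial.coeff_X_pow, Polynomial.coeff_C]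
    simp [hd1.ne', hd2.ne]
  rw [Polynomial.coeff_mul, Finset.Nat.sum_antidiagonal_eq_sum_range_succ_mk] at hcd
  have key : ∑ j ∈ Finset.range n, (g * Polynomial.X ^ l).coeff j *
      (h.reverse * Polynomial.X ^ k).coeff j =
      ∑ m ∈ Finset.range (d + 1), g.coeff m * h.coeff (d - m) := by
    have hsub : Finset.Ico l (l + d + 1) ⊆ Finset.range n := by
      intro j hj
      rw [Finset.mem_Ico] at hj
      rw [Finset.mem_range]
      omega
    have hvanish : ∀ j ∈ Finset.range n, j ∉ Finset.Ico l (l + d + 1) →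
        (g * Polynomial.X ^ l).coeff j * (h.reverse * Polynomial.X ^ k).coeff j = 0 := by
      intro j _ hj
      rw [Finset.mem_Ico, not_and_or, not_le, not_lt] at hj
      rcases hj with hj | hj
      · rw [Polynomial.coeff_mul_X_pow', if_neg (by omega), zero_mul]
      · rw [Polynomial.coeff_mul_X_pow' h.reverse k j]
        by_cases hkj : k ≤ j
        · rw [if_pos hkj, Polynomial.coeff_eq_zero_of_natDegree_lt
            (show h.reverse.natDegree < j - k by omega), mul_zero]
        · rw [if_neg hkj, mul_zero]
    rw [← Finset.sum_subset hsub hvanish, Finset.sum_Ico_eq_sum_range]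
    have hdd : l + d + 1 - l = d + 1 := by omega
    rw [hdd]
    refine Finset.sum_congr rfl fun m hm => ?_
    rw [Finset.mem_range] at hm
    have h1 : (g * Polynomial.X ^ l).coeff (l + m) = g.coeff m := by
      rw [Polynomial.coeff_mul_X_pow', if_pos (by omega)]
      congr 1
      omega
    rw [h1]
    rw [Polynomial.coeff_mul_X_pow' h.reverse k (l + m)]
    by_cases hkm : k ≤ l + m
    · rw [if_pos hkm, Polynomial.coeff_reverse,
        Polynomial.revAt_le (by omega : l + m - k ≤ h.natDegree)]
      congr 2
      omega
    · rw [if_neg hkm, mul_zero,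
        Polynomial.coeff_eq_zero_of_natDegree_lt (by omega : h.natDegree < d - m), mul_zero]
  exact (Fin.sum_univ_eq_sum_range (fun j => (g * Polynomial.X ^ l).coeff j *
    (h.reverse * Polynomial.X ^ k).coeff j) n).trans (key.trans hcd)

end Ortho
section FieldDual
variable {F : Type} [Field F]

lemma span_le_ortho_single {n : ℕ} (s : Set (Fin n → F)) (x : Fin n → F)
    (hall : ∀ z ∈ s, Bf F n z x = 0) :
    ∀ y ∈ Submodule.span F s, Bf F n y x = 0 := by
  intro y hy
  have hle : Submodule.span F s ≤ LinearMap.ker ((Bf F n).flip x) :=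
    Submodule.span_le.mpr fun z hz => LinearMap.mem_ker.mpr (hall z hz)
  exact hle hy

theorem fieldDual {n : ℕ} (hn : 0 < n) (ν : F) (hν : ν ≠ 0) (g h : Polynomial F)
    (hg : g.Monic) (hfac : g * h = Polynomial.X ^ n - Polynomial.C ν) :
    dualCode (vecOf ν (Ideal.span {Ideal.Quotient.mk _ g})) =
      vecOf ν⁻¹ (Ideal.span {Ideal.Quotient.mk
        (Ideal.span {Polynomial.X ^ n - Polynomial.C ν⁻¹}) (recip h)}) := by
  have hGHmonic : (g * h).Monic := by
    rw [hfac]; exact Polynomial.monic_X_pow_sub_C ν hn.ne'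
  have hh : h.Monic := hg.of_mul_monic_left hGHmonic
  have hgne : g ≠ 0 := hg.ne_zero
  have hhne : h ≠ 0 := hh.ne_zero
  have hdeg : g.natDegree + h.natDegree = n := by
    have h1 : (g * h).natDegree = n := by rw [hfac, Polynomial.natDegree_X_pow_sub_C]
    rwa [Polynomial.natDegree_mul hgne hhne] at h1
  have hcoeff0 : g.coeff 0 * h.coeff 0 = -ν := by
    rw [← Polynomial.mul_coeff_zero, hfac, Polynomial.coeff_sub, Polynomial.coeff_X_pow,
      Polynomial.coeff_C]
    simp [hn.ne]
  have h0 : h.coeff 0 ≠ 0 := by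
    intro hc; rw [hc, mul_zero] at hcoeff0
    exact hν (neg_eq_zero.mp hcoeff0.symm)
  have g0 : g.coeff 0 ≠ 0 := by
    intro hc; rw [hc, zero_mul] at hcoeff0
    exact hν (neg_eq_zero.mp hcoeff0.symm)
  have htrailh : h.natTrailingDegree = 0 :=
    Polynomial.natTrailingDegree_eq_zero.mpr (Or.inr h0)
  have htrailg : g.natTrailingDegree = 0 :=
    Polynomial.natTrailingDegree_eq_zero.mpr (Or.inr g0)
  have hrecip : recip h = h.reverse := by
    rw [recip, htrailh, pow_zero, one_mul]
  have hrevdegh : h.reverse.natDegree = h.natDegree := by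
    rw [Polynomial.reverse_natDegree, htrailh, Nat.sub_zero]
  have hrevdegg : g.reverse.natDegree = g.natDegree := by
    rw [Polynomial.reverse_natDegree, htrailg, Nat.sub_zero]
  -- the reversed factorization
  have hrevmul : g.reverse * h.reverse = 1 - Polynomial.C ν * Polynomial.X ^ n := by
    have hlc : g.leadingCoeff * h.leadingCoeff ≠ 0 := by
      rw [hg.leadingCoeff, hh.leadingCoeff, mul_one]; exact one_ne_zero
    rw [← Polynomial.reverse_mul hlc, hfac]
    have hnd : (Polynomial.X ^ n - Polynomial.C ν : Polynomial F).natDegree = n :=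
      Polynomial.natDegree_X_pow_sub_C
    rw [Polynomial.reverse, hnd]
    have hsplit : (Polynomial.X ^ n - Polynomial.C ν : Polynomial F) =
        Polynomial.X ^ n + Polynomial.C (-ν) * Polynomial.X ^ 0 := by
      simp [map_neg]; ring
    rw [hsplit, Polynomial.reflect_add, Polynomial.reflect_monomial,
      Polynomial.reflect_C_mul_X_pow, Polynomial.revAt_le (le_refl n),
      Polynomial.revAt_le (Nat.zero_le n), Nat.sub_self, Nat.sub_zero, pow_zero, map_neg]
    ring
  set G₂ : Polynomial F := Polynomial.C ((h.coeff 0)⁻¹) * h.reverse with hG₂def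
  set H₂ : Polynomial F := Polynomial.C (-(ν⁻¹ * h.coeff 0)) * g.reverse with hH₂def
  have hG₂monic : G₂.Monic := by
    rw [Polynomial.Monic, hG₂def, Polynomial.leadingCoeff_mul, Polynomial.leadingCoeff_C,
      Polynomial.reverse_leadingCoeff, Polynomial.trailingCoeff, htrailh]
    exact inv_mul_cancel₀ h0
  have hfac₂ : G₂ * H₂ = Polynomial.X ^ n - Polynomial.C ν⁻¹ := by
    have e1 : G₂ * H₂ = Polynomial.C ((h.coeff 0)⁻¹ * -(ν⁻¹ * h.coeff 0)) *
        (g.reverse * h.reverse) := by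
      rw [hG₂def, hH₂def, Polynomial.C_mul]; ring
    have e2 : (h.coeff 0)⁻¹ * -(ν⁻¹ * h.coeff 0) = -ν⁻¹ := by
      field_simp
    rw [e1, e2, hrevmul]
    have e3 : (Polynomial.C (-ν⁻¹) : Polynomial F) = -Polynomial.C ν⁻¹ := by rw [map_neg]
    rw [e3]
    have e4 : Polynomial.C ν⁻¹ * (Polynomial.C ν * Polynomial.X ^ n : Polynomial F) =
        Polynomial.X ^ n := by
      rw [← mul_assoc, ← Polynomial.C_mul, inv_mul_cancel₀ hν, Polynomial.C_1, one_mul]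
    calc -Polynomial.C ν⁻¹ * (1 - Polynomial.C ν * Polynomial.X ^ n) =
        Polynomial.C ν⁻¹ * (Polynomial.C ν * Polynomial.X ^ n) - Polynomial.C ν⁻¹ := by ring
      _ = Polynomial.X ^ n - Polynomial.C ν⁻¹ := by rw [e4]
  have hndG₂ : G₂.natDegree = h.natDegree := by
    rw [hG₂def, Polynomial.natDegree_C_mul (inv_ne_zero h0), hrevdegh]
  have hndH₂ : H₂.natDegree = g.natDegree := by
    rw [hH₂def, Polynomial.natDegree_C_mul (by simp [hν, h0]), hrevdegg]
  have hv1 := VEC hn ν g h hg hfac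
  have hv2 := VEC hn ν⁻¹ G₂ H₂ hG₂monic hfac₂
  -- orthogonality
  have hle : LinearMap.range (MG F n G₂ H₂.natDegree) ≤
      (Bf F n).orthogonal (LinearMap.range (MG F n g h.natDegree)) := by
    rw [MG_range_eq_span]
    refine Submodule.span_le.mpr ?_
    rintro x ⟨kk, hkk, rfl⟩
    rw [SetLike.mem_coe, LinearMap.BilinForm.mem_orthogonal_iff]
    intro y hy
    rw [MG_range_eq_span] at hy
    rw [Finset.mem_coe, Finset.mem_range, hndH₂] at hkk
    refine span_le_ortho_single _ _ ?_ y hy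
    rintro z ⟨ll, hll, rfl⟩
    rw [Finset.mem_coe, Finset.mem_range] at hll
    rw [Bf_apply]
    have hGX : G₂ * Polynomial.X ^ kk =
        Polynomial.C ((h.coeff 0)⁻¹) * (h.reverse * Polynomial.X ^ kk) := by
      rw [hG₂def]; ring
    calc ∑ j, theta F n (g * Polynomial.X ^ ll) j * theta F n (G₂ * Polynomial.X ^ kk) j
        = (h.coeff 0)⁻¹ * ∑ j : Fin n, (g * Polynomial.X ^ ll).coeff (j : ℕ) *
            (h.reverse * Polynomial.X ^ kk).coeff (j : ℕ) := by
          rw [Finset.mul_sum]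
          refine Finset.sum_congr rfl fun j _ => ?_
          rw [theta_apply, theta_apply, hGX, Polynomial.coeff_C_mul]
          ring
      _ = 0 := by
          rw [ortho ν hgne hhne hdeg hfac hkk hll, mul_zero]
  have hfr : Module.finrank F (LinearMap.range (MG F n G₂ H₂.natDegree)) =
      Module.finrank F ((Bf F n).orthogonal (LinearMap.range (MG F n g h.natDegree))) := by
    rw [LinearMap.BilinForm.finrank_orthogonal Bf_nondeg,
      MG_finrank hgne (by omega), MG_finrank hG₂monic.ne_zero (by rw [hndG₂, hndH₂]; omega),
      Module.finrank_fin_fun]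
    omega
  have horth : (Bf F n).orthogonal (LinearMap.range (MG F n g h.natDegree)) =
      LinearMap.range (MG F n G₂ H₂.natDegree) :=
    (Submodule.eq_of_le_of_finrank_eq hle hfr).symm
  have hspan : (Ideal.span {Ideal.Quotient.mk
      (Ideal.span {Polynomial.X ^ n - Polynomial.C ν⁻¹}) G₂}) =
      Ideal.span {Ideal.Quotient.mk _ (recip h)} := by
    rw [hrecip]
    have : Ideal.Quotient.mk (Ideal.span {Polynomial.X ^ n - Polynomial.C ν⁻¹}) G₂ =
        Ideal.Quotient.mk _ (Polynomial.C ((h.coeff 0)⁻¹)) *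
          Ideal.Quotient.mk _ h.reverse := by
      rw [hG₂def, map_mul]
    rw [this]
    refine Ideal.span_singleton_mul_left_unit ?_ _
    refine isUnit_iff_exists_inv.mpr ⟨Ideal.Quotient.mk _ (Polynomial.C (h.coeff 0)), ?_⟩
    rw [← map_mul, ← Polynomial.C_mul, inv_mul_cancel₀ h0, Polynomial.C_1, map_one]
  calc dualCode (vecOf ν (Ideal.span {Ideal.Quotient.mk _ g}))
      = dualCode ((LinearMap.range (MG F n g h.natDegree) :
          Submodule F (Fin n → F)) : Set (Fin n → F)) := by rw [hv1]
    _ = ↑((Bf F n).orthogonal (LinearMap.range (MG F n g h.natDegree))) := dual_eq_orth _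
    _ = ((LinearMap.range (MG F n G₂ H₂.natDegree) : Submodule F (Fin n → F)) :
          Set (Fin n → F)) := by rw [horth]
    _ = vecOf ν⁻¹ (Ideal.span {Ideal.Quotient.mk _ G₂}) := hv2.symm
    _ = vecOf ν⁻¹ (Ideal.span {Ideal.Quotient.mk _ (recip h)}) := by rw [hspan]

end FieldDual
section Assembly
variable {F : Type} [Field F]

instance rqNontrivial : Nontrivial (Rq F) :=
  ⟨⟨1, 0, fun h12 => one_ne_zero (α := F)
    (by rw [← map_one (phiI F 0), h12, map_zero])⟩⟩

lemma Pv_map {S T : Type} [CommRing S] [CommRing T] {n : ℕ} (f : S →+* T) (c : Fin n → S) :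
    (Pv c).map f = Pv (fun j => f (c j)) := by
  simp [Pv, Polynomial.map_sum]

lemma phi_unit_ne (lu : (Rq F)ˣ) (i : Fin 4) : phiI F i ↑lu ≠ 0 := by
  intro hc
  have h1 : phiI F i ↑lu * phiI F i ↑lu⁻¹ = 1 := by
    rw [← map_mul, Units.mul_inv, map_one]
  rw [hc, zero_mul] at h1
  exact zero_ne_one h1

lemma phi_unit_inv (lu : (Rq F)ˣ) (i : Fin 4) :
    phiI F i ↑lu⁻¹ = (phiI F i ↑lu)⁻¹ := by
  have h1 : phiI F i ↑lu * phiI F i ↑lu⁻¹ = 1 := by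
    rw [← map_mul, Units.mul_inv, map_one]
  exact (inv_eq_of_mul_eq_one_right h1).symm

lemma LHSred (n : ℕ) (hn : 0 < n) (lu : (Rq F)ˣ)
    (C : Ideal (Polynomial (Rq F) ⧸
      Ideal.span {Polynomial.X ^ n - Polynomial.C (lu : Rq F)}))
    (g : Fin 4 → Polynomial F)
    (hgen : ∀ i, Ideal.map (quotMap F n (lu : Rq F) i) C =
      Ideal.span {Ideal.Quotient.mk _ (g i)})
    (r : Fin n → Rq F) :
    r ∈ dualCode (vecOf (lu : Rq F) C) ↔
      ∀ i, (fun j => phiI F i (r j)) ∈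
        dualCode (vecOf (phiI F i (lu : Rq F))
          (Ideal.span {Ideal.Quotient.mk _ (g i)})) := by
  constructor
  · intro hr i t ht
    simp only [vecOf, Set.mem_setOf_eq] at ht
    rw [← hgen i, Ideal.mem_map_iff_of_surjective _ (quotMap_surj F n _ i)] at ht
    obtain ⟨c, hcC, hc⟩ := ht
    obtain ⟨p, rfl⟩ := Ideal.Quotient.mk_surjective c
    have hM : (Polynomial.X ^ n - Polynomial.C (lu : Rq F)).Monic :=
      Polynomial.monic_X_pow_sub_C _ hn.ne'
    set q := (Polynomial.C (ee F i) * p) %ₘ (Polynomial.X ^ n - Polynomial.C (lu : Rq F))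
      with hq
    have hqdeg : q.degree < (n : WithBot ℕ) := by
      have := Polynomial.degree_modByMonic_lt (Polynomial.C (ee F i) * p) hM
      rwa [Polynomial.degree_X_pow_sub_C hn] at this
    set s : Fin n → Rq F := fun j => q.coeff (j : ℕ) with hsdef
    have hPvs : Pv s = q := Pv_eq_of_degree_lt hqdeg
    have hmkq : Ideal.Quotient.mk (Ideal.span {Polynomial.X ^ n -
        Polynomial.C (lu : Rq F)}) q =
        Ideal.Quotient.mk _ (Polynomial.C (ee F i)) * Ideal.Quotient.mk _ p := by
      have hz : Ideal.Quotient.mk (Ideal.span {Polynomial.X ^ n -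
          Polynomial.C (lu : Rq F)}) (Polynomial.X ^ n - Polynomial.C (lu : Rq F)) = 0 :=
        Ideal.Quotient.eq_zero_iff_mem.mpr (Ideal.subset_span rfl)
      rw [hq, Polynomial.modByMonic_eq_sub_mul_div _ _, map_sub, map_mul, map_mul, hz]
      exact sub_eq_self.mpr (zero_mul (M₀ := Polynomial (Rq F) ⧸
        Ideal.span {Polynomial.X ^ n - Polynomial.C (lu : Rq F)}) _)
    have hs : s ∈ vecOf (lu : Rq F) C := by
      show Ideal.Quotient.mk _ (∑ j : Fin n, Polynomial.C (s j) *
        Polynomial.X ^ (j : ℕ)) ∈ C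
      rw [show (∑ j : Fin n, Polynomial.C (s j) * Polynomial.X ^ (j : ℕ)) = Pv s from rfl,
        hPvs, hmkq]
      exact Ideal.mul_mem_left _ _ hcC
    have h0 := hr s hs
    have hmapq : q.map (phiI F i) = Pv t := by
      refine eq_of_mk_eq hn (phiI F i (lu : Rq F)) ?_
        (lt_of_le_of_lt (Polynomial.degree_map_le) hqdeg) (Pv_degree_lt t)
      rw [← quotMap_mk, hmkq, map_mul, quotMap_C_ee, if_pos rfl, one_mul, hc]
      rfl
    have hst : ∀ j : Fin n, phiI F i (s j) = t j := by
      intro j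
      rw [hsdef]
      have : phiI F i (q.coeff (j : ℕ)) = (q.map (phiI F i)).coeff (j : ℕ) := by
        rw [Polynomial.coeff_map]
      rw [this, hmapq, Pv_coeff]
    have h1 : phiI F i (∑ j, r j * s j) = 0 := by rw [h0, map_zero]
    rw [map_sum] at h1
    simp only [map_mul] at h1
    simp only [hst] at h1
    exact h1
  · intro hr s hs
    apply phi_inj F
    intro i
    rw [map_sum]
    simp only [map_mul]
    have hmem : (fun j => phiI F i (s j)) ∈
        vecOf (phiI F i (lu : Rq F)) (Ideal.span {Ideal.Quotient.mk (Ideal.span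
          {Polynomial.X ^ n - Polynomial.C (phiI F i (lu : Rq F))}) (g i)}) := by
      simp only [vecOf, Set.mem_setOf_eq]
      rw [show (∑ j : Fin n, Polynomial.C (phiI F i (s j)) * Polynomial.X ^ (j : ℕ)) =
        Pv (fun j => phiI F i (s j)) from rfl, ← Pv_map, ← quotMap_mk, ← hgen i]
      exact Ideal.mem_map_of_mem _ hs
    exact hr i (fun j => phiI F i (s j)) hmem

end Assembly
theorem stmt12 (F : Type) [Field F] [Fintype F] (n : ℕ) (hn : 0 < n)
    (lu : (Rq F)ˣ)
    (C : Ideal (Polynomial (Rq F) ⧸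
      Ideal.span {Polynomial.X ^ n - Polynomial.C (lu : Rq F)}))
    (g h : Fin 4 → Polynomial F)
    (hmonic : ∀ i, (g i).Monic)
    (hgen : ∀ i, Ideal.map (quotMap F n (lu : Rq F) i) C =
      Ideal.span {Ideal.Quotient.mk _ (g i)})
    (hfac : ∀ i, g i * h i = Polynomial.X ^ n - Polynomial.C (phiI F i (lu : Rq F))) :
    dualCode (vecOf (lu : Rq F) C) =
      vecOf ((lu⁻¹ : (Rq F)ˣ) : Rq F)
        (Ideal.span {Ideal.Quotient.mk _
          (∑ i : Fin 4, Polynomial.C (ee F i) *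
            (recip (h i)).map (algebraMap F (Rq F)))}) := by
  ext r
  have hstep1 := LHSred n hn lu C g hgen r
  have hfd : ∀ i, dualCode (vecOf (phiI F i (lu : Rq F))
      (Ideal.span {Ideal.Quotient.mk (Ideal.span {Polynomial.X ^ n -
        Polynomial.C (phiI F i (lu : Rq F))}) (g i)})) =
      vecOf (phiI F i ((lu⁻¹ : (Rq F)ˣ) : Rq F))
        (Ideal.span {Ideal.Quotient.mk (Ideal.span {Polynomial.X ^ n -
          Polynomial.C (phiI F i ((lu⁻¹ : (Rq F)ˣ) : Rq F))}) (recip (h i))}) := by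
    intro i
    have h1 := fieldDual hn (phiI F i (lu : Rq F)) (phi_unit_ne lu i) (g i) (h i)
      (hmonic i) (hfac i)
    have h2 : (phiI F i (lu : Rq F))⁻¹ = phiI F i ((lu⁻¹ : (Rq F)ˣ) : Rq F) :=
      (phi_unit_inv lu i).symm
    rw [h2] at h1
    exact h1
  have hstep2 : (∀ i, (fun j => phiI F i (r j)) ∈
      dualCode (vecOf (phiI F i (lu : Rq F))
        (Ideal.span {Ideal.Quotient.mk (Ideal.span {Polynomial.X ^ n -
          Polynomial.C (phiI F i (lu : Rq F))}) (g i)}))) ↔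
      (∀ i, (fun j => phiI F i (r j)) ∈
        vecOf (phiI F i ((lu⁻¹ : (Rq F)ˣ) : Rq F))
          (Ideal.span {Ideal.Quotient.mk (Ideal.span {Polynomial.X ^ n -
            Polynomial.C (phiI F i ((lu⁻¹ : (Rq F)ˣ) : Rq F))}) (recip (h i))})) :=
    forall_congr' fun i => by rw [hfd i]
  have hstep3 : r ∈ vecOf ((lu⁻¹ : (Rq F)ˣ) : Rq F)
      (Ideal.span {Ideal.Quotient.mk _
        (∑ i : Fin 4, Polynomial.C (ee F i) *
          (recip (h i)).map (algebraMap F (Rq F)))}) ↔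
      (∀ i, (fun j => phiI F i (r j)) ∈
        vecOf (phiI F i ((lu⁻¹ : (Rq F)ˣ) : Rq F))
          (Ideal.span {Ideal.Quotient.mk (Ideal.span {Polynomial.X ^ n -
            Polynomial.C (phiI F i ((lu⁻¹ : (Rq F)ˣ) : Rq F))}) (recip (h i))})) := by
    simp only [vecOf, Set.mem_setOf_eq]
    rw [memD F n ((lu⁻¹ : (Rq F)ˣ) : Rq F) (fun i => recip (h i))]
    refine forall_congr' fun i => ?_
    have hqm : quotMap F n ((lu⁻¹ : (Rq F)ˣ) : Rq F) i (Ideal.Quotient.mk _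
        (∑ j : Fin n, Polynomial.C (r j) * Polynomial.X ^ (j : ℕ))) =
        Ideal.Quotient.mk _
          (∑ j : Fin n, Polynomial.C (phiI F i (r j)) * Polynomial.X ^ (j : ℕ)) := by
      rw [quotMap_mk]
      congr 1
      exact Pv_map (phiI F i) r
    rw [hqm]
  exact hstep1.trans (hstep2.trans hstep3.symm)
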